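/- Let ε > 0 and assume the abc conjecture holds for ε with constant κ(ε). Let d, a, b, x, y be integers with ab ≠ 0; set 𝒜 = max(|a|,|b|) and X = max(|x|,|y|). Suppose d ≥ 2, 𝒜 ≥ 2, X ≥ 2 and m := a·x^d + b·y^d ≠ 0. Then X^{d − 2 − 2ε} ≤ κ(ε)·𝒜^{1+2ε}·|m|^{1+ε}, where X^{d − 2 − 2ε} denotes the real power of X with exponent d − 2 − 2ε. -/

import Mathlib

set_option maxHeartbeats 1000000

/-- The radical of a positive integer: the product of its distinct prime divisors. -/
def rad (n : ℕ) : ℕ := ∏ p ∈ n.primeFactors, p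

/-- The abc conjecture holds for `ε` with constant `κ`: for all pairwise coprime positive
integers `a, b, c` with `a + b = c`, one has `c ≤ κ · R(abc)^{1+ε}`. -/
def AbcHolds (ε κ : ℝ) : Prop :=
  ∀ a b c : ℕ, 0 < a → 0 < b → 0 < c →
    Nat.Coprime a b → Nat.Coprime a c → Nat.Coprime b c →
    a + b = c → (c : ℝ) ≤ κ * (rad (a * b * c) : ℝ) ^ (1 + ε)

lemma rad_pos (n : ℕ) : 0 < rad n :=
  Finset.prod_pos fun p hp => (Nat.prime_of_mem_primeFactors hp).pos

lemma rad_dvd_self (n : ℕ) : rad n ∣ n := Nat.prod_primeFactors_dvd n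

lemma rad_dvd_rad {m n : ℕ} (h : m ∣ n) (hn : n ≠ 0) : rad m ∣ rad n :=
  Finset.prod_dvd_prod_of_subset _ _ _ (Nat.primeFactors_mono h hn)

lemma rad_mul_dvd (m n : ℕ) (hm : m ≠ 0) (hn : n ≠ 0) : rad (m * n) ∣ rad m * rad n := by
  unfold rad
  rw [Nat.primeFactors_mul hm hn]
  have h1 : m.primeFactors ∪ n.primeFactors
      = m.primeFactors ∪ (n.primeFactors \ m.primeFactors) := by
    rw [Finset.union_sdiff_self_eq_union]
  rw [h1, Finset.prod_union Finset.disjoint_sdiff]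
  exact mul_dvd_mul_left _ (Finset.prod_dvd_prod_of_subset _ _ _ Finset.sdiff_subset)

lemma rad_pow (n d : ℕ) (hd : d ≠ 0) : rad (n ^ d) = rad n := by
  unfold rad; rw [Nat.primeFactors_pow n hd]

lemma rad_two : rad 2 = 2 := by
  unfold rad; rw [Nat.Prime.primeFactors Nat.prime_two]; simp

lemma kappa_lb (ε κ : ℝ) (habc : AbcHolds ε κ) :
    (2 : ℝ) ≤ κ * (2 : ℝ) ^ ((1:ℝ) + ε) := by
  have h := habc 1 1 2 one_pos one_pos two_pos (Nat.coprime_one_left 1)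
    (Nat.coprime_one_left 2) (Nat.coprime_one_right 2) rfl
  norm_num [rad_two] at h
  exact h

/-- From the abc conjecture: u ≤ κ rad(uvw)^(1+ε) whenever one of the three natural
arrangements of `±u ± v = ±w` holds and u, v are coprime. -/
lemma abc_max (ε κ : ℝ) (habc : AbcHolds ε κ) (u v w : ℕ)
    (hu : 0 < u) (hv : 0 < v) (hw : 0 < w) (huv : Nat.Coprime u v)
    (hrel : u + v = w ∨ u + w = v ∨ v + w = u) :
    (u : ℝ) ≤ κ * (rad (u * v * w) : ℝ) ^ (1 + ε) := by
  rcases hrel with h | h | h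
  · have huw : Nat.Coprime u w := by
      rw [← h, add_comm]; exact Nat.coprime_add_self_right.mpr huv
    have hvw : Nat.Coprime v w := by
      rw [← h]; exact Nat.coprime_add_self_right.mpr huv.symm
    have h2 := habc u v w hu hv hw huv huw hvw h
    have hle : (u : ℝ) ≤ (w : ℝ) := by exact_mod_cast (by omega : u ≤ w)
    exact hle.trans h2
  · have huw : Nat.Coprime u w := by
      have h3 : Nat.Coprime u (u + w) := h ▸ huv
      rwa [add_comm, Nat.coprime_add_self_right] at h3
    have hwv : Nat.Coprime w v := by
      rw [← h]; exact Nat.coprime_add_self_right.mpr huw.symm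
    have h2 := habc u w v hu hw hv huw huv hwv h
    have e : u * w * v = u * v * w := by ring
    rw [e] at h2
    have hle : (u : ℝ) ≤ (v : ℝ) := by exact_mod_cast (by omega : u ≤ v)
    exact hle.trans h2
  · have hvw : Nat.Coprime v w := by
      have h3 : Nat.Coprime v (v + w) := h ▸ huv.symm
      rwa [Nat.coprime_self_add_right] at h3
    have hwu : Nat.Coprime w u := by
      rw [← h]; exact Nat.coprime_add_self_right.mpr hvw.symm
    have h2 := habc v w u hv hw hu hvw huv.symm hwu h
    have e : v * w * u = u * v * w := by ring
    rwa [e] at h2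

/-- The purely real-analytic core computation. -/
lemma real_core (ε κ α β p q g u w : ℝ) (d : ℕ)
    (hε : 0 < ε) (hκ : 0 < κ) (hα : 1 ≤ α) (hβ : 1 ≤ β) (hp : 1 ≤ p)
    (hq : 1 ≤ q) (hg : 1 ≤ g) (hw : 1 ≤ w) (hu : 1 ≤ u) (hqp : q ≤ p)
    (hgu : g * u = α * p ^ d)
    (habc : u ≤ κ * (α * p * (β * q) * w) ^ ((1:ℝ) + ε)) :
    p ^ ((d : ℝ) - 2 - 2 * ε) ≤ κ * (max α β) ^ ((1:ℝ) + 2 * ε) * (g * w) ^ ((1:ℝ) + ε) := by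
  set M := max α β with hM
  have hM1 : 1 ≤ M := le_trans hα (le_max_left _ _)
  have hαM : α ≤ M := le_max_left _ _
  have hβM : β ≤ M := le_max_right _ _
  have hp0 : (0:ℝ) < p := lt_of_lt_of_le one_pos hp
  have hα0 : (0:ℝ) < α := lt_of_lt_of_le one_pos hα
  have hβ0 : (0:ℝ) < β := lt_of_lt_of_le one_pos hβ
  have hq0 : (0:ℝ) < q := lt_of_lt_of_le one_pos hq
  have hg0 : (0:ℝ) < g := lt_of_lt_of_le one_pos hg
  have hw0 : (0:ℝ) < w := lt_of_lt_of_le one_pos hw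
  have hu0 : (0:ℝ) < u := lt_of_lt_of_le one_pos hu
  have hM0 : (0:ℝ) < M := lt_of_lt_of_le one_pos hM1
  rw [← Real.log_le_log_iff (by positivity) (by positivity)]
  have hlog_abc : Real.log u ≤ Real.log κ + (1 + ε) *
      (Real.log α + Real.log p + Real.log β + Real.log q + Real.log w) := by
    have h1 := Real.log_le_log hu0 habc
    rw [Real.log_mul (ne_of_gt hκ) (by positivity),
        Real.log_rpow (by positivity),
        Real.log_mul (by positivity) (by positivity),
        Real.log_mul (by positivity) (by positivity),
        Real.log_mul (by positivity) (by positivity),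
        Real.log_mul (by positivity) (by positivity)] at h1
    linarith
  have hlog_gu : Real.log g + Real.log u = Real.log α + (d : ℝ) * Real.log p := by
    have h1 : Real.log (g * u) = Real.log (α * p ^ d) := by rw [hgu]
    rw [Real.log_mul (ne_of_gt hg0) (ne_of_gt hu0),
        Real.log_mul (ne_of_gt hα0) (by positivity), Real.log_pow] at h1
    exact_mod_cast h1
  rw [Real.log_rpow hp0, Real.log_mul (by positivity) (by positivity),
      Real.log_mul (ne_of_gt hκ) (by positivity),
      Real.log_rpow hM0, Real.log_rpow (by positivity),
      Real.log_mul (ne_of_gt hg0) (ne_of_gt hw0)]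
  have lp0 : 0 ≤ Real.log p := Real.log_nonneg hp
  have lg0 : 0 ≤ Real.log g := Real.log_nonneg hg
  have lw0 : 0 ≤ Real.log w := Real.log_nonneg hw
  have lα0 : 0 ≤ Real.log α := Real.log_nonneg hα
  have lβ0 : 0 ≤ Real.log β := Real.log_nonneg hβ
  have lqp : Real.log q ≤ Real.log p := Real.log_le_log hq0 hqp
  have lαM : Real.log α ≤ Real.log M := Real.log_le_log hα0 hαM
  have lβM : Real.log β ≤ Real.log M := Real.log_le_log hβ0 hβM
  have e1 : ε * Real.log α ≤ ε * Real.log M := by nlinarith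
  have e2 : (1 + ε) * Real.log β ≤ (1 + ε) * Real.log M := by nlinarith
  have e3 : (1 + ε) * Real.log q ≤ (1 + ε) * Real.log p := by nlinarith
  have e4 : 0 ≤ ε * Real.log g := by positivity
  have e5 : 0 ≤ ε * Real.log p := by positivity
  nlinarith [hlog_abc, hlog_gu]

/-- The main estimate, under the additional symmetry-breaking assumption `|y| ≤ |x|`. -/
lemma reduced (ε κ : ℝ) (hε : 0 < ε) (hκ : 0 < κ) (habc : AbcHolds ε κ)
    (d : ℕ) (a b x y : ℤ) (hd : 2 ≤ d) (ha : a ≠ 0) (hb : b ≠ 0)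
    (hA : 2 ≤ max |a| |b|) (hyx : |y| ≤ |x|) (hX : 2 ≤ |x|)
    (hm : a * x ^ d + b * y ^ d ≠ 0) :
    ((max |x| |y| : ℤ) : ℝ) ^ ((d : ℝ) - 2 - 2 * ε)
      ≤ κ * ((max |a| |b| : ℤ) : ℝ) ^ ((1 : ℝ) + 2 * ε) *
          ((|a * x ^ d + b * y ^ d| : ℤ) : ℝ) ^ ((1 : ℝ) + ε) := by
  rw [max_eq_left hyx]
  set α := a.natAbs with hαdef
  set β := b.natAbs with hβdef
  set p := x.natAbs with hpdef
  set q := y.natAbs with hqdef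
  have hp2 : 2 ≤ p := by
    rw [Int.abs_eq_natAbs] at hX; exact_mod_cast hX
  have hα1 : 1 ≤ α := Nat.one_le_iff_ne_zero.2 (Int.natAbs_ne_zero.2 ha)
  have hβ1 : 1 ≤ β := Nat.one_le_iff_ne_zero.2 (Int.natAbs_ne_zero.2 hb)
  have hqp : q ≤ p := by
    rw [Int.abs_eq_natAbs, Int.abs_eq_natAbs] at hyx; exact_mod_cast hyx
  set C := (a * x ^ d + b * y ^ d).natAbs with hCdef
  have hC0 : 0 < C := Int.natAbs_pos.2 hm
  -- cast identities for the goal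
  have castX : ((|x| : ℤ) : ℝ) = (p : ℝ) := by
    rw [hpdef]; push_cast [Nat.cast_natAbs]; ring
  have castA : ((max |a| |b| : ℤ) : ℝ) = max (α : ℝ) (β : ℝ) := by
    rw [hαdef, hβdef]; push_cast [Nat.cast_natAbs]; ring
  have castM : ((|a * x ^ d + b * y ^ d| : ℤ) : ℝ) = (C : ℝ) := by
    rw [hCdef]; push_cast [Nat.cast_natAbs]; ring
  rw [castX, castA, castM]
  have hAA : 2 ≤ max (α : ℝ) (β : ℝ) := by
    rw [← castA]; exact_mod_cast hA
  by_cases hy : y = 0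
  · -- degenerate case: y = 0, so |m| = |a| p^d ≥ p^d
    subst hy
    have hCeq : C = α * p ^ d := by
      rw [hCdef]
      have : b * (0:ℤ) ^ d = 0 := by
        rw [zero_pow (by omega : d ≠ 0), mul_zero]
      rw [this, add_zero, Int.natAbs_mul, Int.natAbs_pow]
    have hpd : p ^ d ≤ C := by
      rw [hCeq]; exact Nat.le_mul_of_pos_left _ (by omega)
    have hp1R : (1:ℝ) ≤ (p : ℝ) := by exact_mod_cast by omega
    have hC1R : (1:ℝ) ≤ (C : ℝ) := by exact_mod_cast hC0
    have step1 : (p : ℝ) ^ ((d : ℝ) - 2 - 2 * ε) ≤ (p : ℝ) ^ ((d : ℝ)) :=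
      Real.rpow_le_rpow_of_exponent_le hp1R (by nlinarith)
    have step2 : (p : ℝ) ^ ((d : ℝ)) ≤ (C : ℝ) := by
      rw [Real.rpow_natCast]
      exact_mod_cast hpd
    have step3 : (C : ℝ) ≤ (C : ℝ) ^ ((1:ℝ) + ε) := by
      nth_rewrite 1 [← Real.rpow_one (C : ℝ)]
      exact Real.rpow_le_rpow_of_exponent_le hC1R (by linarith)
    have step4 : (1 : ℝ) ≤ κ * (max (α : ℝ) (β : ℝ)) ^ ((1:ℝ) + 2 * ε) := by
      have k1 := kappa_lb ε κ habc
      have e1 : (2:ℝ) ^ ((1:ℝ) + 2 * ε) = 2 ^ ((1:ℝ) + ε) * 2 ^ ε := by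
        rw [← Real.rpow_add two_pos]; ring_nf
      have e2 : (2:ℝ) ^ ((1:ℝ) + 2 * ε) ≤ (max (α : ℝ) (β : ℝ)) ^ ((1:ℝ) + 2 * ε) :=
        Real.rpow_le_rpow (by norm_num) hAA (by linarith)
      have e3 : (1:ℝ) ≤ (2:ℝ) ^ ε := Real.one_le_rpow (by norm_num) hε.le
      have e4 : (0:ℝ) < (2:ℝ) ^ ((1:ℝ) + ε) := Real.rpow_pos_of_pos two_pos _
      nlinarith
    calc (p : ℝ) ^ ((d : ℝ) - 2 - 2 * ε)
        ≤ (C : ℝ) := step1.trans step2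
      _ = 1 * (C : ℝ) := by ring
      _ ≤ (κ * (max (α : ℝ) (β : ℝ)) ^ ((1:ℝ) + 2 * ε)) * ((C : ℝ) ^ ((1:ℝ) + ε)) := by
          apply mul_le_mul step4 step3 (by positivity) (by positivity)
      _ = κ * (max (α : ℝ) (β : ℝ)) ^ ((1:ℝ) + 2 * ε) * (C : ℝ) ^ ((1:ℝ) + ε) := by ring
  · -- main case: x, y both nonzero
    have hq1 : 1 ≤ q := Nat.one_le_iff_ne_zero.2 (Int.natAbs_ne_zero.2 hy)
    set A := α * p ^ d with hAdef
    set B := β * q ^ d with hBdef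
    have hAnat : (a * x ^ d).natAbs = A := by rw [Int.natAbs_mul, Int.natAbs_pow]
    have hBnat : (b * y ^ d).natAbs = B := by rw [Int.natAbs_mul, Int.natAbs_pow]
    have hA0 : 0 < A := Nat.mul_pos (by omega) (Nat.pow_pos (n := d) (by omega))
    have hB0 : 0 < B := Nat.mul_pos (by omega) (Nat.pow_pos (n := d) (by omega))
    have harr : A + B = C ∨ A + C = B ∨ B + C = A := by
      rw [← hAnat, ← hBnat, hCdef]
      set s := a * x ^ d
      set t := b * y ^ d
      omega
    set g := Nat.gcd A B with hgdef
    have hg0 : 0 < g := Nat.gcd_pos_of_pos_left _ hA0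
    have hgA : g ∣ A := Nat.gcd_dvd_left A B
    have hgB : g ∣ B := Nat.gcd_dvd_right A B
    have hgC : g ∣ C := by
      rcases harr with h | h | h
      · exact h ▸ dvd_add hgA hgB
      · have hC' : C = B - A := by omega
        exact hC' ▸ Nat.dvd_sub hgB hgA
      · have hC' : C = A - B := by omega
        exact hC' ▸ Nat.dvd_sub hgA hgB
    obtain ⟨u, hu⟩ := hgA
    obtain ⟨v, hv⟩ := hgB
    obtain ⟨w, hw⟩ := hgC
    have hu0 : 0 < u := Nat.pos_of_ne_zero fun h => by simp [hu, h] at hA0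
    have hv0 : 0 < v := Nat.pos_of_ne_zero fun h => by simp [hv, h] at hB0
    have hw0 : 0 < w := Nat.pos_of_ne_zero fun h => by simp [hw, h] at hC0
    have hudiv : A / g = u := by rw [hu]; exact Nat.mul_div_cancel_left u hg0
    have hvdiv : B / g = v := by rw [hv]; exact Nat.mul_div_cancel_left v hg0
    have huv : Nat.Coprime u v := by
      rw [← hudiv, ← hvdiv]
      exact Nat.coprime_div_gcd_div_gcd hg0
    have hrel : u + v = w ∨ u + w = v ∨ v + w = u := by
      rcases harr with h | h | h
      · left
        apply Nat.eq_of_mul_eq_mul_left hg0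
        rw [mul_add, ← hu, ← hv, ← hw]; exact h
      · right; left
        apply Nat.eq_of_mul_eq_mul_left hg0
        rw [mul_add, ← hu, ← hw, ← hv]; exact h
      · right; right
        apply Nat.eq_of_mul_eq_mul_left hg0
        rw [mul_add, ← hv, ← hw, ← hu]; exact h
    have key := abc_max ε κ habc u v w hu0 hv0 hw0 huv hrel
    -- radical bound
    have huA : u ∣ A := ⟨g, by rw [hu]; ring⟩
    have hvB : v ∣ B := ⟨g, by rw [hv]; ring⟩
    have hradu : rad u ≤ α * p := by
      have h1 : rad u ∣ rad A := rad_dvd_rad huA (by omega)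
      have h2 : rad A ∣ rad α * rad (p ^ d) := rad_mul_dvd α (p ^ d) (by omega) (pow_ne_zero d (by omega))
      rw [rad_pow p d (by omega)] at h2
      have h3 : rad α * rad p ∣ α * p := mul_dvd_mul (rad_dvd_self α) (rad_dvd_self p)
      exact Nat.le_of_dvd (Nat.mul_pos (by omega) (by omega)) (h1.trans (h2.trans h3))
    have hradv : rad v ≤ β * q := by
      have h1 : rad v ∣ rad B := rad_dvd_rad hvB (by omega)
      have h2 : rad B ∣ rad β * rad (q ^ d) := rad_mul_dvd β (q ^ d) (by omega) (pow_ne_zero d (by omega))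
      rw [rad_pow q d (by omega)] at h2
      have h3 : rad β * rad q ∣ β * q := mul_dvd_mul (rad_dvd_self β) (rad_dvd_self q)
      exact Nat.le_of_dvd (Nat.mul_pos (by omega) (by omega)) (h1.trans (h2.trans h3))
    have hradw : rad w ≤ w := Nat.le_of_dvd hw0 (rad_dvd_self w)
    have hradb : rad (u * v * w) ≤ α * p * (β * q) * w := by
      have h1 : rad (u * v * w) ∣ rad (u * v) * rad w :=
        rad_mul_dvd (u * v) w (Nat.mul_ne_zero (by omega) (by omega)) (by omega)
      have h2 : rad (u * v) * rad w ∣ (rad u * rad v) * rad w :=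
        mul_dvd_mul_right (rad_mul_dvd u v (by omega) (by omega)) _
      have h3 : rad (u * v * w) ≤ rad u * rad v * rad w :=
        Nat.le_of_dvd (Nat.mul_pos (Nat.mul_pos (rad_pos u) (rad_pos v)) (rad_pos w)) (h1.trans h2)
      exact h3.trans (Nat.mul_le_mul (Nat.mul_le_mul hradu hradv) hradw)
    -- real version of abc bound
    have kreal : (u : ℝ) ≤ κ * ((α : ℝ) * p * ((β : ℝ) * q) * w) ^ ((1:ℝ) + ε) := by
      refine key.trans ?_
      apply mul_le_mul_of_nonneg_left _ hκ.le
      apply Real.rpow_le_rpow (by positivity) _ (by linarith)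
      exact_mod_cast hradb
    have hgu_real : (g : ℝ) * (u : ℝ) = (α : ℝ) * (p : ℝ) ^ d := by
      have : (g * u : ℕ) = α * p ^ d := by rw [← hu]
      exact_mod_cast this
    have main := real_core ε κ α β p q g u w d hε hκ
      (by exact_mod_cast hα1) (by exact_mod_cast hβ1) (by exact_mod_cast by omega : (1:ℝ) ≤ p)
      (by exact_mod_cast hq1) (by exact_mod_cast hg0) (by exact_mod_cast hw0)
      (by exact_mod_cast hu0) (by exact_mod_cast hqp) hgu_real kreal
    have hCgw : (C : ℝ) = (g : ℝ) * (w : ℝ) := by exact_mod_cast hw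
    rw [hCgw]
    exact main

theorem abc_implies_binomial_bound
    (ε κ : ℝ) (hε : 0 < ε) (hκ : 0 < κ) (habc : AbcHolds ε κ)
    (d : ℕ) (a b x y : ℤ) (hd : 2 ≤ d) (hab : a * b ≠ 0)
    (hA : 2 ≤ max |a| |b|) (hX : 2 ≤ max |x| |y|)
    (hm : a * x ^ d + b * y ^ d ≠ 0) :
    ((max |x| |y| : ℤ) : ℝ) ^ ((d : ℝ) - 2 - 2 * ε)
      ≤ κ * ((max |a| |b| : ℤ) : ℝ) ^ ((1 : ℝ) + 2 * ε) *
          ((|a * x ^ d + b * y ^ d| : ℤ) : ℝ) ^ ((1 : ℝ) + ε) := by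
  have ha : a ≠ 0 := left_ne_zero_of_mul hab
  have hb : b ≠ 0 := right_ne_zero_of_mul hab
  rcases le_total |y| |x| with hyx | hxy
  · have hX' : 2 ≤ |x| := by rw [max_eq_left hyx] at hX; exact hX
    exact reduced ε κ hε hκ habc d a b x y hd ha hb hA hyx hX' hm
  · have hX' : 2 ≤ |y| := by rw [max_eq_right hxy] at hX; exact hX
    have hA' : 2 ≤ max |b| |a| := by rwa [max_comm]
    have hm' : b * y ^ d + a * x ^ d ≠ 0 := by rwa [add_comm]
    have := reduced ε κ hε hκ habc d b a y x hd hb ha hA' hxy hX' hm'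
    rw [max_comm |x| |y|, max_comm |a| |b|, add_comm (a * x ^ d)]
    exact this
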